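/- Let ε₀ > 0 and let f ∈ C¹(ℝ \ [−ε, ε]) for every ε > 0 satisfy |f(x)| ≤ |x|^{−1/2} for all x ∈ ℝ and |f'(x)| ≤ C|x|^{−3/2} for all x ∈ [−ε₀, ε₀] \ {0}. Then there exists a constant C₁ depending only on C such that for all x ∈ [−ε₀/2, ε₀/2] \ {0}, the Hilbert transform satisfies |H(f)(x)| ≤ C₁/√|x|. -/

import Mathlib

set_option maxHeartbeats 1000000


open MeasureTheory Real Filter Set


lemma isOpen_abs_gt (ε : ℝ) : IsOpen {y : ℝ | ε < |y|} :=
  isOpen_lt continuous_const continuous_abs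

lemma contOn_of_hsm {f : ℝ → ℝ}
    (hsm : ∀ ε > 0, ContDiffOn ℝ 1 f {x : ℝ | ε < |x|}) :
    ∀ y : ℝ, y ≠ 0 → ContinuousAt f y := by
  intro y hy
  have h1 : (0:ℝ) < |y|/2 := by simpa using abs_pos.mpr hy
  have h2 : y ∈ {x : ℝ | |y|/2 < |x|} := by
    simp only [mem_setOf_eq]
    nlinarith [abs_pos.mpr hy]
  exact ((hsm (|y|/2) h1).continuousOn.continuousAt ((isOpen_abs_gt _).mem_nhds h2))

lemma diffAt_of_hsm {f : ℝ → ℝ}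
    (hsm : ∀ ε > 0, ContDiffOn ℝ 1 f {x : ℝ | ε < |x|}) :
    ∀ y : ℝ, y ≠ 0 → DifferentiableAt ℝ f y := by
  intro y hy
  have h1 : (0:ℝ) < |y|/2 := by simpa using abs_pos.mpr hy
  have h2 : y ∈ {x : ℝ | |y|/2 < |x|} := by
    simp only [mem_setOf_eq]
    nlinarith [abs_pos.mpr hy]
  exact ((hsm (|y|/2) h1).contDiffAt ((isOpen_abs_gt _).mem_nhds h2)).differentiableAt one_ne_zero

lemma aesm_of_hsm {f : ℝ → ℝ}
    (hsm : ∀ ε > 0, ContDiffOn ℝ 1 f {x : ℝ | ε < |x|}) :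
    AEStronglyMeasurable f (volume : Measure ℝ) := by
  have hs : MeasurableSet {y : ℝ | y ≠ 0} := (measurableSet_singleton 0).compl
  have hc : ContinuousOn f {y : ℝ | y ≠ 0} := fun y hy =>
    (contOn_of_hsm hsm y hy).continuousWithinAt
  have := hc.aestronglyMeasurable (μ := volume) hs
  rwa [Measure.restrict_eq_self_of_ae_mem ?h] at this
  case h =>
    rw [ae_iff]
    have he : {y : ℝ | ¬ y ∈ {y : ℝ | y ≠ 0}} = {(0:ℝ)} := by ext z; simp
    rw [he]
    exact volume_singleton

lemma setIntegral_comp_neg (f : ℝ → ℝ) (s : Set ℝ) :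
    ∫ y in (fun y : ℝ => -y) ⁻¹' s, f (-y) = ∫ y in s, f y := by
  have A : MeasurableEmbedding fun x : ℝ => -x :=
    (Homeomorph.neg ℝ).isClosedEmbedding.measurableEmbedding
  have := A.setIntegral_map (μ := volume) f s
  rw [Measure.map_neg_eq_self (volume : Measure ℝ)] at this
  exact this.symm

lemma integrableOn_comp_neg {f : ℝ → ℝ} {s : Set ℝ} (h : IntegrableOn f s) :
    IntegrableOn (fun y => f (-y)) ((fun y : ℝ => -y) ⁻¹' s) := by
  have A : MeasurableEmbedding fun x : ℝ => -x :=
    (Homeomorph.neg ℝ).isClosedEmbedding.measurableEmbedding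
  have := A.integrableOn_map_iff (f := f) (s := s) (μ := volume)
  rw [Measure.map_neg_eq_self (volume : Measure ℝ)] at this
  exact this.mp h  -- comp

lemma aesm_div {f : ℝ → ℝ} (haesm : AEStronglyMeasurable f (volume : Measure ℝ))
    (x : ℝ) (s : Set ℝ) :
    AEStronglyMeasurable (fun y => f y / (x - y)) (volume.restrict s) := by
  have h1 : AEStronglyMeasurable (fun y : ℝ => (x - y)⁻¹) (volume.restrict s) :=
    (((measurable_const.sub measurable_id).inv).aestronglyMeasurable).restrict
  simp only [div_eq_mul_inv]
  exact haesm.restrict.mul h1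

lemma rpow_neg_half_eq (x : ℝ) (hx : 0 ≤ x) : x ^ (-(1:ℝ)/2) = 1 / Real.sqrt x := by
  rw [show (-(1:ℝ)/2) = -(1/2 : ℝ) by norm_num, Real.rpow_neg hx, Real.sqrt_eq_rpow]
  exact (one_div _).symm

lemma rpow_split (t : ℝ) (ht : 0 < t) : t ^ (-(3:ℝ)/2) = t ^ (-(1:ℝ)/2) * t⁻¹ := by
  rw [show (-(3:ℝ)/2) = (-(1:ℝ)/2) + (-1) by norm_num, Real.rpow_add ht, Real.rpow_neg_one]

lemma pieceA {f : ℝ → ℝ} (haesm : AEStronglyMeasurable f (volume : Measure ℝ))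
    (hf : ∀ y : ℝ, y ≠ 0 → |f y| ≤ |y| ^ (-(1:ℝ)/2)) {x : ℝ} (hx0 : 0 < x) :
    IntegrableOn (fun y => f y / (x - y)) (Iio (-x)) ∧
      |∫ y in Iio (-x), f y / (x - y)| ≤ 2 / Real.sqrt x := by
  set g : ℝ → ℝ := fun y => (-y) ^ (-(3:ℝ)/2) with hg
  have hpre : ((fun y : ℝ => -y) ⁻¹' (Ioi x)) = Iio (-x) := by
    ext y; simp only [mem_preimage, mem_Ioi, mem_Iio]; constructor <;> intro h <;> linarith
  have hgint : IntegrableOn g (Iio (-x)) := by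
    have := integrableOn_comp_neg (integrableOn_Ioi_rpow_of_lt (by norm_num : (-(3:ℝ)/2) < -1) hx0)
    rwa [hpre] at this
  have hbd : ∀ᵐ y ∂(volume.restrict (Iio (-x))), ‖f y / (x - y)‖ ≤ g y := by
    filter_upwards [ae_restrict_mem measurableSet_Iio] with y hy
    have hy' : y < -x := hy
    have h2 : (0:ℝ) < -y := by linarith
    have h1 : |f y| ≤ (-y) ^ (-(1:ℝ)/2) := by
      have := hf y (by intro h; rw [h] at hy'; linarith)
      rwa [abs_of_neg (by linarith : y < 0)] at this
    have h3 : -y ≤ |x - y| := by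
      rw [abs_of_pos (by linarith : (0:ℝ) < x - y)]; linarith
    have h4 : |f y / (x - y)| ≤ (-y) ^ (-(1:ℝ)/2) / (-y) := by
      rw [abs_div]
      exact div_le_div₀ (Real.rpow_nonneg h2.le _) h1 h2 h3
    rw [Real.norm_eq_abs]
    calc |f y / (x - y)| ≤ (-y) ^ (-(1:ℝ)/2) / (-y) := h4
      _ = g y := by rw [hg]; simp only; rw [rpow_split _ h2, div_eq_mul_inv]
  have hint : IntegrableOn (fun y => f y / (x - y)) (Iio (-x)) := by
    exact Integrable.mono' hgint (aesm_div haesm x _) hbd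
  refine ⟨hint, ?_⟩
  have hval : ∫ y in Iio (-x), g y = 2 / Real.sqrt x := by
    have := setIntegral_comp_neg (fun t => t ^ (-(3:ℝ)/2)) (Ioi x)
    rw [hpre] at this
    rw [hg]; simp only
    rw [this, integral_Ioi_rpow_of_lt (by norm_num : (-(3:ℝ)/2) < -1) hx0]
    rw [show (-(3:ℝ)/2 + 1) = (-(1:ℝ)/2) by norm_num, rpow_neg_half_eq x hx0.le]
    ring
  calc |∫ y in Iio (-x), f y / (x - y)| ≤ ∫ y in Iio (-x), g y := by
        rw [← Real.norm_eq_abs]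
        exact norm_integral_le_of_norm_le hgint hbd
    _ = 2 / Real.sqrt x := hval

lemma int_Ioo_rpow_neg_half (a : ℝ) (ha : 0 < a) :
    IntegrableOn (fun t : ℝ => t ^ (-(1:ℝ)/2)) (Ioo 0 a) ∧
      ∫ t in Ioo 0 a, t ^ (-(1:ℝ)/2) = 2 * Real.sqrt a := by
  have hii : IntervalIntegrable (fun t : ℝ => t ^ (-(1:ℝ)/2)) volume 0 a :=
    intervalIntegral.intervalIntegrable_rpow' (by norm_num)
  have hint : IntegrableOn (fun t : ℝ => t ^ (-(1:ℝ)/2)) (Ioc 0 a) :=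
    (intervalIntegrable_iff_integrableOn_Ioc_of_le ha.le).mp hii
  have hint' : IntegrableOn (fun t : ℝ => t ^ (-(1:ℝ)/2)) (Ioo 0 a) :=
    hint.mono_set Ioo_subset_Ioc_self
  refine ⟨hint', ?_⟩
  rw [setIntegral_congr_set Ioo_ae_eq_Ioc, ← intervalIntegral.integral_of_le ha.le,
    integral_rpow (Or.inl (by norm_num : (-1:ℝ) < -(1:ℝ)/2))]
  rw [show (-(1:ℝ)/2 + 1) = (1/2:ℝ) by norm_num, Real.zero_rpow (by norm_num : (1/2:ℝ) ≠ 0),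
    ← Real.sqrt_eq_rpow]
  ring

lemma int_Ioi_rpow_neg_threehalf (a : ℝ) (ha : 0 < a) :
    IntegrableOn (fun t : ℝ => t ^ (-(3:ℝ)/2)) (Ioi a) ∧
      ∫ t in Ioi a, t ^ (-(3:ℝ)/2) = 2 / Real.sqrt a := by
  refine ⟨integrableOn_Ioi_rpow_of_lt (by norm_num) ha, ?_⟩
  rw [integral_Ioi_rpow_of_lt (by norm_num : (-(3:ℝ)/2) < -1) ha,
    show (-(3:ℝ)/2 + 1) = (-(1:ℝ)/2) by norm_num, rpow_neg_half_eq a ha.le]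
  ring

lemma pieceB {f : ℝ → ℝ} (haesm : AEStronglyMeasurable f (volume : Measure ℝ))
    (hf : ∀ y : ℝ, y ≠ 0 → |f y| ≤ |y| ^ (-(1:ℝ)/2)) {x : ℝ} (hx0 : 0 < x) :
    IntegrableOn (fun y => f y / (x - y)) (Ioo (-x) 0) ∧
      |∫ y in Ioo (-x) 0, f y / (x - y)| ≤ 2 / Real.sqrt x := by
  set g : ℝ → ℝ := fun y => (-y) ^ (-(1:ℝ)/2) * x⁻¹ with hg
  have hpre : ((fun y : ℝ => -y) ⁻¹' (Ioo 0 x)) = Ioo (-x) 0 := by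
    ext y; simp only [mem_preimage, mem_Ioo]
    constructor <;> rintro ⟨h1, h2⟩ <;> constructor <;> linarith
  have base := int_Ioo_rpow_neg_half x hx0
  have hgint : IntegrableOn g (Ioo (-x) 0) := by
    have := (integrableOn_comp_neg base.1).mul_const x⁻¹
    rwa [hpre] at this
  have hbd : ∀ᵐ y ∂(volume.restrict (Ioo (-x) 0)), ‖f y / (x - y)‖ ≤ g y := by
    filter_upwards [ae_restrict_mem measurableSet_Ioo] with y hy
    obtain ⟨hy1, hy2⟩ := hy
    have h2 : (0:ℝ) < -y := by linarith
    have h1 : |f y| ≤ (-y) ^ (-(1:ℝ)/2) := by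
      have := hf y (by intro h; rw [h] at hy2; linarith)
      rwa [abs_of_neg hy2] at this
    have h3 : x ≤ |x - y| := by
      rw [abs_of_pos (by linarith : (0:ℝ) < x - y)]; linarith
    rw [Real.norm_eq_abs, abs_div]
    calc |f y| / |x - y| ≤ (-y) ^ (-(1:ℝ)/2) / x :=
          div_le_div₀ (Real.rpow_nonneg h2.le _) h1 hx0 h3
      _ = g y := by rw [hg, div_eq_mul_inv]
  have hint : IntegrableOn (fun y => f y / (x - y)) (Ioo (-x) 0) :=
    Integrable.mono' hgint (aesm_div haesm x _) hbd
  refine ⟨hint, ?_⟩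
  have hval : ∫ y in Ioo (-x) 0, g y = 2 / Real.sqrt x := by
    have hcn := setIntegral_comp_neg (fun t => t ^ (-(1:ℝ)/2)) (Ioo 0 x)
    rw [hpre] at hcn
    rw [hg]
    rw [integral_mul_const, hcn, base.2]
    have h2 : Real.sqrt x * Real.sqrt x = x := Real.mul_self_sqrt hx0.le
    have hs : (0:ℝ) < Real.sqrt x := Real.sqrt_pos.mpr hx0
    field_simp
    nlinarith [h2]
  calc |∫ y in Ioo (-x) 0, f y / (x - y)| ≤ ∫ y in Ioo (-x) 0, g y := by
        rw [← Real.norm_eq_abs]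
        exact norm_integral_le_of_norm_le hgint hbd
    _ = 2 / Real.sqrt x := hval

lemma pieceC {f : ℝ → ℝ} (haesm : AEStronglyMeasurable f (volume : Measure ℝ))
    (hf : ∀ y : ℝ, y ≠ 0 → |f y| ≤ |y| ^ (-(1:ℝ)/2)) {x : ℝ} (hx0 : 0 < x) :
    IntegrableOn (fun y => f y / (x - y)) (Ioo 0 (x/2)) ∧
      |∫ y in Ioo 0 (x/2), f y / (x - y)| ≤ 4 / Real.sqrt x := by
  set g : ℝ → ℝ := fun y => y ^ (-(1:ℝ)/2) * (x/2)⁻¹ with hg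
  have hx2 : (0:ℝ) < x/2 := by linarith
  have base := int_Ioo_rpow_neg_half (x/2) hx2
  have hgint : IntegrableOn g (Ioo 0 (x/2)) := base.1.mul_const _
  have hbd : ∀ᵐ y ∂(volume.restrict (Ioo 0 (x/2))), ‖f y / (x - y)‖ ≤ g y := by
    filter_upwards [ae_restrict_mem measurableSet_Ioo] with y hy
    obtain ⟨hy1, hy2⟩ := hy
    have h1 : |f y| ≤ y ^ (-(1:ℝ)/2) := by
      have := hf y (ne_of_gt hy1)
      rwa [abs_of_pos hy1] at this
    have h3 : x/2 ≤ |x - y| := by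
      rw [abs_of_pos (by linarith : (0:ℝ) < x - y)]; linarith
    rw [Real.norm_eq_abs, abs_div]
    calc |f y| / |x - y| ≤ y ^ (-(1:ℝ)/2) / (x/2) :=
          div_le_div₀ (Real.rpow_nonneg hy1.le _) h1 hx2 h3
      _ = g y := by rw [hg, div_eq_mul_inv]
  have hint : IntegrableOn (fun y => f y / (x - y)) (Ioo 0 (x/2)) :=
    Integrable.mono' hgint (aesm_div haesm x _) hbd
  refine ⟨hint, ?_⟩
  have h2 : Real.sqrt (x/2) * Real.sqrt (x/2) = x/2 := Real.mul_self_sqrt hx2.le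
  have hs' : (0:ℝ) < Real.sqrt (x/2) := Real.sqrt_pos.mpr hx2
  have hval : ∫ y in Ioo 0 (x/2), g y = 2 / Real.sqrt (x/2) := by
    rw [hg, integral_mul_const, base.2, eq_div_iff (ne_of_gt hs'),
      show 2 * Real.sqrt (x/2) * (x/2)⁻¹ * Real.sqrt (x/2)
        = 2 * (Real.sqrt (x/2) * Real.sqrt (x/2)) * (x/2)⁻¹ by ring, h2]
    field_simp
  have hcmp : 2 / Real.sqrt (x/2) ≤ 4 / Real.sqrt x := by
    have hs : (0:ℝ) < Real.sqrt x := Real.sqrt_pos.mpr hx0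
    have hs2 : (0:ℝ) < Real.sqrt (x/2) := Real.sqrt_pos.mpr hx2
    have hle : Real.sqrt x / 2 ≤ Real.sqrt (x/2) := by
      have e1 : Real.sqrt (x/4) = Real.sqrt x / 2 := by
        rw [Real.sqrt_div hx0.le, show (4:ℝ) = 2^2 by norm_num,
          Real.sqrt_sq (by norm_num : (0:ℝ) ≤ 2)]
      rw [← e1]
      exact Real.sqrt_le_sqrt (by linarith)
    calc 2 / Real.sqrt (x/2) ≤ 2 / (Real.sqrt x / 2) :=
          div_le_div_of_nonneg_left (by norm_num) (by linarith) hle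
      _ = 4 / Real.sqrt x := by field_simp; ring
  calc |∫ y in Ioo 0 (x/2), f y / (x - y)| ≤ ∫ y in Ioo 0 (x/2), g y := by
        rw [← Real.norm_eq_abs]
        exact norm_integral_le_of_norm_le hgint hbd
    _ = 2 / Real.sqrt (x/2) := hval
    _ ≤ 4 / Real.sqrt x := hcmp

lemma pieceD {f : ℝ → ℝ} (haesm : AEStronglyMeasurable f (volume : Measure ℝ))
    (hf : ∀ y : ℝ, y ≠ 0 → |f y| ≤ |y| ^ (-(1:ℝ)/2)) {x : ℝ} (hx0 : 0 < x) :
    IntegrableOn (fun y => f y / (x - y)) (Ioi (3*x/2)) ∧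
      |∫ y in Ioi (3*x/2), f y / (x - y)| ≤ 6 / Real.sqrt x := by
  set g : ℝ → ℝ := fun y => y ^ (-(3:ℝ)/2) * 3 with hg
  have hx2 : (0:ℝ) < 3*x/2 := by linarith
  have base := int_Ioi_rpow_neg_threehalf (3*x/2) hx2
  have hgint : IntegrableOn g (Ioi (3*x/2)) := base.1.mul_const _
  have hbd : ∀ᵐ y ∂(volume.restrict (Ioi (3*x/2))), ‖f y / (x - y)‖ ≤ g y := by
    filter_upwards [ae_restrict_mem measurableSet_Ioi] with y hy
    have hy1 : 3*x/2 < y := hy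
    have hy0 : (0:ℝ) < y := by linarith
    have h1 : |f y| ≤ y ^ (-(1:ℝ)/2) := by
      have := hf y (ne_of_gt hy0)
      rwa [abs_of_pos hy0] at this
    have h3 : y/3 ≤ |x - y| := by
      rw [abs_of_neg (by linarith : x - y < 0)]; linarith
    rw [Real.norm_eq_abs, abs_div]
    calc |f y| / |x - y| ≤ y ^ (-(1:ℝ)/2) / (y/3) :=
          div_le_div₀ (Real.rpow_nonneg hy0.le _) h1 (by linarith) h3
      _ = g y := by
          rw [hg]; simp only
          rw [rpow_split _ hy0, div_div_eq_mul_div, div_eq_mul_inv]; ring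
  have hint : IntegrableOn (fun y => f y / (x - y)) (Ioi (3*x/2)) :=
    Integrable.mono' hgint (aesm_div haesm x _) hbd
  refine ⟨hint, ?_⟩
  have hval : ∫ y in Ioi (3*x/2), g y = 6 / Real.sqrt (3*x/2) := by
    rw [hg, integral_mul_const, base.2]; ring
  have hcmp : 6 / Real.sqrt (3*x/2) ≤ 6 / Real.sqrt x := by
    apply div_le_div_of_nonneg_left (by norm_num) (Real.sqrt_pos.mpr hx0)
    exact Real.sqrt_le_sqrt (by linarith)
  calc |∫ y in Ioi (3*x/2), f y / (x - y)| ≤ ∫ y in Ioi (3*x/2), g y := by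
        rw [← Real.norm_eq_abs]
        exact norm_integral_le_of_norm_le hgint hbd
    _ = 6 / Real.sqrt (3*x/2) := hval
    _ ≤ 6 / Real.sqrt x := hcmp

lemma pieceM {f : ℝ → ℝ} {x δ K : ℝ} (hx0 : 0 < x) (hδ0 : 0 < δ) (hδx : δ < x/2)
    (hK0 : 0 ≤ K)
    (hdiff : ∀ z ∈ Ioo (x/2) (3*x/2), DifferentiableAt ℝ f z)
    (hcont : ContinuousOn f (Icc (x/2) (3*x/2)))
    (hK : ∀ z ∈ Ioo (x/2) (3*x/2), |deriv f z| ≤ K) :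
    IntegrableOn (fun y => f y / (x - y)) (Ioo (x/2) (x - δ)) ∧
      IntegrableOn (fun y => f y / (x - y)) (Ioo (x + δ) (3*x/2)) ∧
      |(∫ y in Ioo (x/2) (x - δ), f y / (x - y)) +
        ∫ y in Ioo (x + δ) (3*x/2), f y / (x - y)| ≤ K * x := by
  have hlt1 : x/2 < x - δ := by linarith
  have hlt2 : x + δ < 3*x/2 := by linarith
  have hsub1 : Icc (x/2) (x - δ) ⊆ Icc (x/2) (3*x/2) := Icc_subset_Icc le_rfl (by linarith)
  have hsub2 : Icc (x + δ) (3*x/2) ⊆ Icc (x/2) (3*x/2) := Icc_subset_Icc (by linarith) le_rfl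
  have hconst : ContinuousOn (fun y : ℝ => x - y) (univ : Set ℝ) :=
    (continuous_const.sub continuous_id).continuousOn
  -- continuity of the main integrand on the two compact intervals
  have hne1 : ∀ y ∈ Icc (x/2) (x - δ), x - y ≠ 0 := by
    rintro y ⟨h1, h2⟩; intro h; linarith [h2, hδ0]
  have hne2 : ∀ y ∈ Icc (x + δ) (3*x/2), x - y ≠ 0 := by
    rintro y ⟨h1, h2⟩; intro h; linarith
  have hF1 : ContinuousOn (fun y => f y / (x - y)) (Icc (x/2) (x - δ)) :=
    (hcont.mono hsub1).div (hconst.mono (subset_univ _)) hne1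
  have hF2 : ContinuousOn (fun y => f y / (x - y)) (Icc (x + δ) (3*x/2)) :=
    (hcont.mono hsub2).div (hconst.mono (subset_univ _)) hne2
  have int1 : IntegrableOn (fun y => f y / (x - y)) (Ioo (x/2) (x - δ)) :=
    (hF1.integrableOn_Icc).mono_set Ioo_subset_Icc_self
  have int2 : IntegrableOn (fun y => f y / (x - y)) (Ioo (x + δ) (3*x/2)) :=
    (hF2.integrableOn_Icc).mono_set Ioo_subset_Icc_self
  refine ⟨int1, int2, ?_⟩
  -- auxiliary integrands
  set g : ℝ → ℝ := fun y => (f y - f x) / (x - y) with hgdef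
  have hG1 : ContinuousOn g (Icc (x/2) (x - δ)) :=
    ((hcont.mono hsub1).sub continuousOn_const).div (hconst.mono (subset_univ _)) hne1
  have hG2 : ContinuousOn g (Icc (x + δ) (3*x/2)) :=
    ((hcont.mono hsub2).sub continuousOn_const).div (hconst.mono (subset_univ _)) hne2
  have intg1 : IntegrableOn g (Ioo (x/2) (x - δ)) :=
    hG1.integrableOn_Icc.mono_set Ioo_subset_Icc_self
  have intg2 : IntegrableOn g (Ioo (x + δ) (3*x/2)) :=
    hG2.integrableOn_Icc.mono_set Ioo_subset_Icc_self
  have hH1 : ContinuousOn (fun y : ℝ => (x - y)⁻¹) (Icc (x/2) (x - δ)) :=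
    (hconst.mono (subset_univ _)).inv₀ hne1
  have hH2 : ContinuousOn (fun y : ℝ => (x - y)⁻¹) (Icc (x + δ) (3*x/2)) :=
    (hconst.mono (subset_univ _)).inv₀ hne2
  have inth1 : IntegrableOn (fun y : ℝ => (x - y)⁻¹) (Ioo (x/2) (x - δ)) :=
    hH1.integrableOn_Icc.mono_set Ioo_subset_Icc_self
  have inth2 : IntegrableOn (fun y : ℝ => (x - y)⁻¹) (Ioo (x + δ) (3*x/2)) :=
    hH2.integrableOn_Icc.mono_set Ioo_subset_Icc_self
  -- split each integral
  have hsplit1 : ∫ y in Ioo (x/2) (x - δ), f y / (x - y)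
      = (∫ y in Ioo (x/2) (x - δ), g y) + f x * ∫ y in Ioo (x/2) (x - δ), (x - y)⁻¹ := by
    rw [← integral_const_mul, ← integral_add intg1 (inth1.const_mul (f x))]
    apply setIntegral_congr_fun measurableSet_Ioo
    intro y hy
    have : x - y ≠ 0 := hne1 y (Ioo_subset_Icc_self hy)
    rw [hgdef]; simp only; field_simp; ring
  have hsplit2 : ∫ y in Ioo (x + δ) (3*x/2), f y / (x - y)
      = (∫ y in Ioo (x + δ) (3*x/2), g y) + f x * ∫ y in Ioo (x + δ) (3*x/2), (x - y)⁻¹ := by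
    rw [← integral_const_mul, ← integral_add intg2 (inth2.const_mul (f x))]
    apply setIntegral_congr_fun measurableSet_Ioo
    intro y hy
    have : x - y ≠ 0 := hne2 y (Ioo_subset_Icc_self hy)
    rw [hgdef]; simp only; field_simp; ring
  -- the logarithmic terms cancel
  have hA1 : ∫ y in Ioo (x/2) (x - δ), (x - y)⁻¹ = Real.log ((x/2)/δ) := by
    rw [setIntegral_congr_set Ioo_ae_eq_Ioc, ← intervalIntegral.integral_of_le hlt1.le,
      intervalIntegral.integral_comp_sub_left (fun t : ℝ => t⁻¹) x,
      show x - (x - δ) = δ by ring, show x - x/2 = x/2 by ring,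
      integral_inv]
    rw [uIcc_of_le (by linarith : δ ≤ x/2)]
    rintro ⟨h1, h2⟩; linarith
  have hA2 : ∫ y in Ioo (x + δ) (3*x/2), (x - y)⁻¹ = Real.log (δ/(x/2)) := by
    rw [setIntegral_congr_set Ioo_ae_eq_Ioc, ← intervalIntegral.integral_of_le hlt2.le,
      intervalIntegral.integral_comp_sub_left (fun t : ℝ => t⁻¹) x,
      show x - 3*x/2 = -(x/2) by ring, show x - (x + δ) = -δ by ring,
      integral_inv, neg_div_neg_eq]
    rw [uIcc_of_le (by linarith : -(x/2) ≤ -δ)]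
    rintro ⟨h1, h2⟩; linarith
  have hcancel : Real.log ((x/2)/δ) + Real.log (δ/(x/2)) = 0 := by
    rw [← Real.log_mul (by positivity) (by positivity),
      show ((x/2)/δ) * (δ/(x/2)) = 1 by field_simp, Real.log_one]
  -- MVT bound on g
  have hxmem : x ∈ Ioo (x/2) (3*x/2) := ⟨by linarith, by linarith⟩
  have hlip : ∀ y ∈ Ioo (x/2) (3*x/2), |f y - f x| ≤ K * |y - x| := by
    intro y hy
    have := (convex_Ioo (x/2) (3*x/2)).norm_image_sub_le_of_norm_deriv_le hdiff
      (fun z hz => by rw [Real.norm_eq_abs]; exact hK z hz) hxmem hy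
    simpa [Real.norm_eq_abs] using this
  have hgb : ∀ y ∈ Ioo (x/2) (3*x/2), y ≠ x → |g y| ≤ K := by
    intro y hy hyx
    have h0 : (0:ℝ) < |x - y| := abs_pos.mpr (by intro h; apply hyx; linarith)
    rw [hgdef]; simp only [abs_div]
    rw [div_le_iff₀ h0]
    calc |f y - f x| ≤ K * |y - x| := hlip y hy
      _ = K * |x - y| := by rw [abs_sub_comm]
  -- bound each g-integral
  have hb1 : |∫ y in Ioo (x/2) (x - δ), g y| ≤ K * (x/2) := by
    have hmeas : volume (Ioo (x/2) (x - δ)) < ⊤ := by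
      rw [Real.volume_Ioo]; exact ENNReal.ofReal_lt_top
    have := norm_setIntegral_le_of_norm_le_const hmeas
      (fun y (hy : y ∈ Ioo (x/2) (x - δ)) => by
        rw [Real.norm_eq_abs]
        exact hgb y ⟨hy.1, by linarith [hy.2]⟩ (by intro h; linarith [hy.2, hδ0]))
      (C := K)
    rw [Real.norm_eq_abs] at this
    calc |∫ y in Ioo (x/2) (x - δ), g y| ≤ K * (volume (Ioo (x/2) (x - δ))).toReal := this
      _ ≤ K * (x/2) := by
          apply mul_le_mul_of_nonneg_left _ hK0
          rw [Real.volume_Ioo, ENNReal.toReal_ofReal (by linarith)]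
          linarith
  have hb2 : |∫ y in Ioo (x + δ) (3*x/2), g y| ≤ K * (x/2) := by
    have hmeas : volume (Ioo (x + δ) (3*x/2)) < ⊤ := by
      rw [Real.volume_Ioo]; exact ENNReal.ofReal_lt_top
    have := norm_setIntegral_le_of_norm_le_const hmeas
      (fun y (hy : y ∈ Ioo (x + δ) (3*x/2)) => by
        rw [Real.norm_eq_abs]
        exact hgb y ⟨by linarith [hy.1], hy.2⟩ (by intro h; linarith [hy.1, hδ0]))
      (C := K)
    rw [Real.norm_eq_abs] at this
    calc |∫ y in Ioo (x + δ) (3*x/2), g y| ≤ K * (volume (Ioo (x + δ) (3*x/2))).toReal := this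
      _ ≤ K * (x/2) := by
          apply mul_le_mul_of_nonneg_left _ hK0
          rw [Real.volume_Ioo, ENNReal.toReal_ofReal (by linarith)]
          linarith
  rw [hsplit1, hsplit2, hA1, hA2]
  have : (∫ y in Ioo (x/2) (x - δ), g y) + f x * Real.log ((x/2)/δ)
      + ((∫ y in Ioo (x + δ) (3*x/2), g y) + f x * Real.log (δ/(x/2)))
      = (∫ y in Ioo (x/2) (x - δ), g y) + (∫ y in Ioo (x + δ) (3*x/2), g y)
        + f x * (Real.log ((x/2)/δ) + Real.log (δ/(x/2))) := by ring
  rw [this, hcancel, mul_zero, add_zero]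
  calc |(∫ y in Ioo (x/2) (x - δ), g y) + ∫ y in Ioo (x + δ) (3*x/2), g y|
      ≤ |∫ y in Ioo (x/2) (x - δ), g y| + |∫ y in Ioo (x + δ) (3*x/2), g y| := abs_add_le _ _
    _ ≤ K * (x/2) + K * (x/2) := add_le_add hb1 hb2
    _ = K * x := by ring

lemma key {f : ℝ → ℝ} {C ε₀ : ℝ} (hC : 0 < C)
    (hsm : ∀ ε > 0, ContDiffOn ℝ 1 f {x : ℝ | ε < |x|})
    (hf : ∀ y : ℝ, y ≠ 0 → |f y| ≤ |y| ^ (-(1:ℝ)/2))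
    (hf' : ∀ y ∈ Icc (-ε₀) ε₀, y ≠ 0 → |deriv f y| ≤ C * |y| ^ (-(3:ℝ)/2))
    {x : ℝ} (hx0 : 0 < x) (hxε : x ≤ ε₀/2)
    {δ : ℝ} (hδ0 : 0 < δ) (hδx : δ < x/2) :
    |∫ y in {y : ℝ | δ < |x - y|}, f y / (x - y)| ≤ (15 + 3*C) / Real.sqrt x := by
  have hε₀ : 0 < ε₀ := by linarith
  have haesm := aesm_of_hsm hsm
  have hA := pieceA haesm hf hx0
  have hB := pieceB haesm hf hx0
  have hCc := pieceC haesm hf hx0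
  have hD := pieceD haesm hf hx0
  set K : ℝ := C * ((x/2) ^ (-(3:ℝ)/2)) with hKdef
  have hK0 : 0 ≤ K := by positivity
  have hdiff : ∀ z ∈ Ioo (x/2) (3*x/2), DifferentiableAt ℝ f z := fun z hz =>
    diffAt_of_hsm hsm z (by have := hz.1; intro h; rw [h] at this; linarith)
  have hcont : ContinuousOn f (Icc (x/2) (3*x/2)) := fun z hz =>
    (contOn_of_hsm hsm z (by have := hz.1; intro h; rw [h] at this; linarith)).continuousWithinAt
  have hKb : ∀ z ∈ Ioo (x/2) (3*x/2), |deriv f z| ≤ K := by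
    intro z hz
    have hz0 : 0 < z := by have := hz.1; linarith
    have hmem : z ∈ Icc (-ε₀) ε₀ := ⟨by linarith, by have := hz.2; linarith⟩
    calc |deriv f z| ≤ C * |z| ^ (-(3:ℝ)/2) := hf' z hmem (ne_of_gt hz0)
      _ ≤ K := by
          rw [hKdef, abs_of_pos hz0]
          apply mul_le_mul_of_nonneg_left _ hC.le
          exact Real.rpow_le_rpow_of_nonpos (by linarith) (by have := hz.1; linarith)
            (by norm_num)
  have hM := pieceM hx0 hδ0 hδx hK0 hdiff hcont hKb
  set S : Set ℝ := {y : ℝ | δ < |x - y|} with hSdef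
  set S' : Set ℝ := ((((Iio (-x) ∪ Ioo (-x) 0) ∪ Ioo 0 (x/2)) ∪ Ioo (x/2) (x - δ))
      ∪ Ioo (x + δ) (3*x/2)) ∪ Ioi (3*x/2) with hS'def
  have hsubS : S' ⊆ S := by
    intro y hy
    simp only [hS'def, mem_union, mem_Iio, mem_Ioo, mem_Ioi] at hy
    simp only [hSdef, mem_setOf_eq, lt_abs]
    rcases hy with ((((h | h) | h) | h) | h) | h
    · left; linarith
    · left; linarith [h.1, h.2]
    · left; linarith [h.1, h.2]
    · left; linarith [h.1, h.2]
    · right; linarith [h.1, h.2]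
    · right; linarith
  have hdiffsub : S \ S' ⊆ ({-x, 0, x/2, 3*x/2} : Set ℝ) := by
    rintro y ⟨hyS, hyn⟩
    simp only [hS'def, mem_union, mem_Iio, mem_Ioo, mem_Ioi, not_or, not_and, not_lt] at hyn
    obtain ⟨⟨⟨⟨⟨h1, h2⟩, h3⟩, h4⟩, h5⟩, h6⟩ := hyn
    simp only [hSdef, mem_setOf_eq, lt_abs] at hyS
    simp only [mem_insert_iff, mem_singleton_iff]
    by_contra hno
    push_neg at hno
    obtain ⟨e1, e2, e3, e4⟩ := hno
    have g1 : -x < y := lt_of_le_of_ne h1 (Ne.symm e1)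
    have g2 : 0 < y := lt_of_le_of_ne (h2 g1) (Ne.symm e2)
    have g3 : x/2 < y := lt_of_le_of_ne (h3 g2) (Ne.symm e3)
    have g4 : x - δ ≤ y := h4 g3
    rcases hyS with h | h
    · linarith
    · have g5 : 3*x/2 ≤ y := h5 (by linarith)
      exact e4 (le_antisymm h6 g5)
  have hae : S =ᵐ[volume] S' := by
    rw [MeasureTheory.ae_eq_set]
    constructor
    · exact measure_mono_null hdiffsub ((Set.toFinite _).measure_zero volume)
    · rw [diff_eq_empty.mpr hsubS]; exact measure_empty
  -- disjointness facts
  have d1 : Disjoint (Iio (-x)) (Ioo (-x) 0) := by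
    rw [Set.disjoint_left]; intro y hy1 hy2
    simp only [mem_Iio, mem_Ioo] at hy1 hy2; linarith [hy2.1]
  have d2 : Disjoint ((Iio (-x) ∪ Ioo (-x) 0)) (Ioo 0 (x/2)) := by
    rw [Set.disjoint_left]; intro y hy1 hy2
    simp only [mem_union, mem_Iio, mem_Ioo] at hy1 hy2
    rcases hy1 with h | h
    · linarith [hy2.1]
    · linarith [h.2, hy2.1]
  have d3 : Disjoint ((Iio (-x) ∪ Ioo (-x) 0) ∪ Ioo 0 (x/2)) (Ioo (x/2) (x - δ)) := by
    rw [Set.disjoint_left]; intro y hy1 hy2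
    simp only [mem_union, mem_Iio, mem_Ioo] at hy1 hy2
    rcases hy1 with (h | h) | h
    · linarith [hy2.1]
    · linarith [h.2, hy2.1]
    · linarith [h.2, hy2.1]
  have d4 : Disjoint (((Iio (-x) ∪ Ioo (-x) 0) ∪ Ioo 0 (x/2)) ∪ Ioo (x/2) (x - δ))
      (Ioo (x + δ) (3*x/2)) := by
    rw [Set.disjoint_left]; intro y hy1 hy2
    simp only [mem_union, mem_Iio, mem_Ioo] at hy1 hy2
    rcases hy1 with ((h | h) | h) | h
    · linarith [hy2.1]
    · linarith [h.2, hy2.1]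
    · linarith [h.2, hy2.1]
    · linarith [h.2, hy2.1]
  have d5 : Disjoint ((((Iio (-x) ∪ Ioo (-x) 0) ∪ Ioo 0 (x/2)) ∪ Ioo (x/2) (x - δ))
      ∪ Ioo (x + δ) (3*x/2)) (Ioi (3*x/2)) := by
    rw [Set.disjoint_left]; intro y hy1 hy2
    simp only [mem_union, mem_Iio, mem_Ioo, mem_Ioi] at hy1 hy2
    rcases hy1 with (((h | h) | h) | h) | h
    · linarith
    · linarith [h.2]
    · linarith [h.2]
    · linarith [h.2]
    · linarith [h.2]
  -- integrability of unions
  have i2 := (hA.1.union hB.1)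
  have i3 := i2.union hCc.1
  have i4 := i3.union hM.1
  have i5 := i4.union hM.2.1
  -- split the integral
  have esplit : ∫ y in S', f y / (x - y)
      = ((((∫ y in Iio (-x), f y / (x - y)) + ∫ y in Ioo (-x) 0, f y / (x - y))
        + ∫ y in Ioo 0 (x/2), f y / (x - y)) + ∫ y in Ioo (x/2) (x - δ), f y / (x - y))
        + ((∫ y in Ioo (x + δ) (3*x/2), f y / (x - y)) + ∫ y in Ioi (3*x/2), f y / (x - y)) := by
    rw [hS'def]
    rw [setIntegral_union d5 measurableSet_Ioi i5 hD.1,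
      setIntegral_union d4 measurableSet_Ioo i4 hM.2.1,
      setIntegral_union d3 measurableSet_Ioo i3 hM.1,
      setIntegral_union d2 measurableSet_Ioo i2 hCc.1,
      setIntegral_union d1 measurableSet_Ioo hA.1 hB.1]
    ring
  have e0 : ∫ y in S, f y / (x - y) = ∫ y in S', f y / (x - y) :=
    setIntegral_congr_set hae
  -- bound on K * x
  have hKx : K * x ≤ 3 * C / Real.sqrt x := by
    have h1 : (x/2) ^ (-(3:ℝ)/2) = x ^ (-(3:ℝ)/2) * 2 ^ ((3:ℝ)/2) := by
      rw [Real.div_rpow hx0.le (by norm_num : (0:ℝ) ≤ 2), div_eq_mul_inv,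
        ← Real.rpow_neg (by norm_num : (0:ℝ) ≤ 2)]
      norm_num
    have h2 : x ^ (-(3:ℝ)/2) * x = x ^ (-(1:ℝ)/2) := by
      nth_rewrite 2 [← Real.rpow_one x]
      rw [← Real.rpow_add hx0]
      norm_num
    have h8 : (2:ℝ) ^ (3:ℝ) = 8 := by
      rw [show (3:ℝ) = ((3:ℕ):ℝ) by norm_num, Real.rpow_natCast]; norm_num
    have h3 : (2:ℝ) ^ ((3:ℝ)/2) ≤ 3 := by
      rw [show (3:ℝ)/2 = (3:ℝ) * (1/2) by ring,
        Real.rpow_mul (by norm_num : (0:ℝ) ≤ 2), h8, ← Real.sqrt_eq_rpow]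
      rw [show (3:ℝ) = Real.sqrt 9 by
        rw [show (9:ℝ) = 3^2 by norm_num, Real.sqrt_sq (by norm_num : (0:ℝ) ≤ 3)]]
      exact Real.sqrt_le_sqrt (by norm_num)
    calc K * x = C * (2 ^ ((3:ℝ)/2)) * (x ^ (-(3:ℝ)/2) * x) := by rw [hKdef, h1]; ring
      _ = C * (2 ^ ((3:ℝ)/2)) * x ^ (-(1:ℝ)/2) := by rw [h2]
      _ ≤ C * 3 * x ^ (-(1:ℝ)/2) := by
          apply mul_le_mul_of_nonneg_right _ (Real.rpow_nonneg hx0.le _)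
          exact mul_le_mul_of_nonneg_left h3 hC.le
      _ = 3 * C / Real.sqrt x := by
          rw [rpow_neg_half_eq x hx0.le]; ring
  -- assemble
  rw [hSdef] at e0 ⊢
  rw [e0, esplit]
  have habs : ∀ a b c m1 m2 d : ℝ, |(((a + b) + c) + m1) + (m2 + d)|
      ≤ (((|a| + |b|) + |c|) + |m1 + m2|) + |d| := by
    intro a b c m1 m2 d
    calc |(((a + b) + c) + m1) + (m2 + d)| = |((((a + b) + c) + (m1 + m2)) + d)| := by ring_nf
      _ ≤ |(((a + b) + c) + (m1 + m2))| + |d| := abs_add_le _ _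
      _ ≤ (|((a + b) + c)| + |m1 + m2|) + |d| := by gcongr; exact abs_add_le _ _
      _ ≤ ((|a + b| + |c|) + |m1 + m2|) + |d| := by gcongr; exact abs_add_le _ _
      _ ≤ (((|a| + |b|) + |c|) + |m1 + m2|) + |d| := by gcongr; exact abs_add_le _ _
  refine le_trans (habs _ _ _ _ _ _) ?_
  have hsx : 0 < Real.sqrt x := Real.sqrt_pos.mpr hx0
  have := hA.2; have := hB.2; have := hCc.2; have := hD.2; have := hM.2.2
  calc (((|∫ y in Iio (-x), f y / (x - y)| + |∫ y in Ioo (-x) 0, f y / (x - y)|)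
        + |∫ y in Ioo 0 (x/2), f y / (x - y)|)
        + |(∫ y in Ioo (x/2) (x - δ), f y / (x - y)) + ∫ y in Ioo (x + δ) (3*x/2), f y / (x - y)|)
        + |∫ y in Ioi (3*x/2), f y / (x - y)|
      ≤ (((2 / Real.sqrt x + 2 / Real.sqrt x) + 4 / Real.sqrt x) + K * x) + 6 / Real.sqrt x := by
        gcongr <;> assumption
    _ ≤ (((2 / Real.sqrt x + 2 / Real.sqrt x) + 4 / Real.sqrt x) + 3 * C / Real.sqrt x)
        + 6 / Real.sqrt x := by gcongr
    _ = (14 + 3*C) / Real.sqrt x := by ring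
    _ ≤ (15 + 3*C) / Real.sqrt x := by gcongr; linarith

/-- `HilbertAt f x L` means the Hilbert transform `(1/π) P.V. ∫ f(y)/(x−y) dy`
exists at `x` and equals `L`, in the principal value sense. -/
def HilbertAt (f : ℝ → ℝ) (x L : ℝ) : Prop :=
  Tendsto (fun δ : ℝ => (1 / π) * ∫ y in {y : ℝ | δ < |x - y|}, f y / (x - y))
    (nhdsWithin 0 (Ioi 0)) (nhds L)

/-- Pointwise estimate of the Hilbert transform near the singularity: if
`|f(x)| ≤ |x|^{-1/2}` on `ℝ`, `f` is `C¹` away from `0`, and `|f'(x)| ≤ C|x|^{-3/2}`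
on `[−ε₀, ε₀]`, then `|H(f)(x)| ≤ C₁/√|x|` on `[−ε₀/2, ε₀/2]`, with `C₁`
depending only on `C`. -/
theorem stmt2 (C : ℝ) (hC : 0 < C) :
    ∃ C₁ : ℝ, 0 < C₁ ∧
      ∀ (f : ℝ → ℝ) (ε₀ : ℝ), 0 < ε₀ →
        (∀ ε > 0, ContDiffOn ℝ 1 f {x : ℝ | ε < |x|}) →
        (∀ x : ℝ, x ≠ 0 → |f x| ≤ |x| ^ (-(1 : ℝ) / 2)) →
        (∀ x ∈ Icc (-ε₀) ε₀, x ≠ 0 → |deriv f x| ≤ C * |x| ^ (-(3 : ℝ) / 2)) →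
        ∀ x ∈ Icc (-(ε₀ / 2)) (ε₀ / 2), x ≠ 0 →
          ∀ L : ℝ, HilbertAt f x L → |L| ≤ C₁ / Real.sqrt |x| := by
  refine ⟨15 + 3 * C, by linarith, ?_⟩
  intro f ε₀ hε₀ hsm hf hf' x hx hx0 L hL
  have hax : 0 < |x| := abs_pos.mpr hx0
  have hmem : Ioo (0:ℝ) (|x|/2) ∈ nhdsWithin (0:ℝ) (Ioi 0) :=
    Ioo_mem_nhdsGT_of_mem ⟨le_refl 0, by positivity⟩
  refine le_of_tendsto hL.abs ?_
  filter_upwards [hmem] with δ hδ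
  obtain ⟨hδ0, hδx⟩ := hδ
  have hIb : |∫ y in {y : ℝ | δ < |x - y|}, f y / (x - y)| ≤ (15 + 3 * C) / Real.sqrt |x| := by
    rcases hx0.lt_or_gt with hneg | hpos
    · -- x < 0 : use the reflected function
      set g : ℝ → ℝ := fun y => f (-y) with hgdef
      have hsm_g : ∀ ε > 0, ContDiffOn ℝ 1 g {x : ℝ | ε < |x|} := by
        intro ε hε
        have hneg' : ContDiffOn ℝ 1 (fun y : ℝ => -y) {x : ℝ | ε < |x|} :=
          (contDiff_id.neg).contDiffOn
        exact (hsm ε hε).comp hneg' (fun y hy => by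
          simp only [mem_setOf_eq, abs_neg]; exact hy)
      have hf_g : ∀ y : ℝ, y ≠ 0 → |g y| ≤ |y| ^ (-(1:ℝ)/2) := by
        intro y hy
        have := hf (-y) (neg_ne_zero.mpr hy)
        rwa [abs_neg] at this
      have hf'_g : ∀ y ∈ Icc (-ε₀) ε₀, y ≠ 0 → |deriv g y| ≤ C * |y| ^ (-(3:ℝ)/2) := by
        intro y hy hy0
        rw [hgdef]
        rw [deriv_comp_neg (f := f), abs_neg]
        have hmem' : -y ∈ Icc (-ε₀) ε₀ := ⟨by linarith [hy.2], by linarith [hy.1]⟩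
        have := hf' (-y) hmem' (neg_ne_zero.mpr hy0)
        rwa [abs_neg] at this
      have hxpos : 0 < -x := by linarith
      have haxx : |x| = -x := abs_of_neg hneg
      have hxeps : -x ≤ ε₀ / 2 := by have := hx.1; linarith
      have hkey := key hC hsm_g hf_g hf'_g hxpos hxeps hδ0 (by rw [haxx] at hδx; linarith)
      -- relate the two integrals
      have hpre : ((fun y : ℝ => -y) ⁻¹' {z : ℝ | δ < |x - z|}) = {y : ℝ | δ < |(-x) - y|} := by
        ext y; simp only [mem_preimage, mem_setOf_eq]
        rw [show x - -y = -(-x - y) by ring, abs_neg]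
      have h1 := setIntegral_comp_neg (fun z => f z / (x - z)) {z : ℝ | δ < |x - z|}
      rw [hpre] at h1
      have hms : MeasurableSet {y : ℝ | δ < |(-x) - y|} :=
        (isOpen_lt continuous_const ((continuous_const.sub continuous_id).abs)).measurableSet
      have h2 : ∫ y in {y : ℝ | δ < |(-x) - y|}, f (-y) / (x - -y)
          = - ∫ y in {y : ℝ | δ < |(-x) - y|}, g y / ((-x) - y) := by
        rw [← integral_neg]
        apply setIntegral_congr_fun hms
        intro y _
        rw [hgdef]
        simp only
        rw [show x - -y = -((-x) - y) by ring, div_neg]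
      rw [← h1, h2, abs_neg, haxx]
      exact hkey
    · -- x > 0 : direct
      have haxx : |x| = x := abs_of_pos hpos
      have hxeps : x ≤ ε₀ / 2 := hx.2
      rw [haxx] at hδx ⊢
      exact key hC hsm hf hf' hpos hxeps hδ0 hδx
  have hpi1 : |1 / π| ≤ 1 := by
    rw [abs_of_pos (by positivity : (0:ℝ) < 1 / π)]
    rw [div_le_one Real.pi_pos]
    linarith [Real.pi_gt_three]
  calc |(1 / π) * ∫ y in {y : ℝ | δ < |x - y|}, f y / (x - y)|
      = |1 / π| * |∫ y in {y : ℝ | δ < |x - y|}, f y / (x - y)| := abs_mul _ _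
    _ ≤ 1 * |∫ y in {y : ℝ | δ < |x - y|}, f y / (x - y)| :=
        mul_le_mul_of_nonneg_right hpi1 (abs_nonneg _)
    _ = |∫ y in {y : ℝ | δ < |x - y|}, f y / (x - y)| := one_mul _
    _ ≤ (15 + 3 * C) / Real.sqrt |x| := hIb
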